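/- For all positive integers m > n with gcd(m, n) = 1 and m ≢ n (mod 3), the triples (m² + mn + n², m² + 2mn, n² + 2mn) and (m² + mn + n², m² + 2mn, m² − n²) are primitive Eisensteinian triplets; that is, each has positive entries, satisfies a² = b² + c² − bc, and has gcd of its three entries equal to 1. -/

import Mathlib

/-- A primitive Eisensteinian triplet: positive integers with
`a² = b² + c² − bc` and `gcd(a,b,c) = 1`. -/
def IsPrimitiveEisenstein (a b c : ℤ) : Prop :=
  0 < a ∧ 0 < b ∧ 0 < c ∧ a ^ 2 = b ^ 2 + c ^ 2 - b * c ∧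
    Int.gcd a (Int.gcd b c) = 1

lemma gilder_key (m n : ℤ) (hg : Int.gcd m n = 1) (h3 : ¬ m ≡ n [ZMOD 3]) :
    Int.gcd (m ^ 2 + m * n + n ^ 2) (m ^ 2 + 2 * m * n) = 1 := by
  by_contra hone
  have hco : IsCoprime m n := Int.isCoprime_iff_gcd_eq_one.mpr hg
  have h3' : ¬ (3 : ℤ) ∣ n - m := by
    intro hd
    exact h3 ((Int.modEq_iff_dvd.mpr hd))
  set a : ℤ := m ^ 2 + m * n + n ^ 2 with ha
  set b : ℤ := m ^ 2 + 2 * m * n with hb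
  set g : ℕ := Int.gcd a b with hgdef
  obtain ⟨q, hq, hqg⟩ := Nat.exists_prime_and_dvd hone
  have hp : Prime (q : ℤ) := Nat.prime_iff_prime_int.mp hq
  have hpa : (q : ℤ) ∣ a := dvd_trans (Int.natCast_dvd_natCast.mpr hqg) (Int.gcd_dvd_left a b)
  have hpb : (q : ℤ) ∣ b := dvd_trans (Int.natCast_dvd_natCast.mpr hqg) (Int.gcd_dvd_right a b)
  -- p ∣ a - b = n * (n - m)
  have h1 : (q : ℤ) ∣ n * (n - m) := by
    have : a - b = n * (n - m) := by ring
    rw [← this]; exact dvd_sub hpa hpb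
  have hnotmn : ¬ ((q : ℤ) ∣ m ∧ (q : ℤ) ∣ n) := by
    rintro ⟨h1, h2⟩
    exact hp.not_unit (hco.isUnit_of_dvd' h1 h2)
  rcases hp.dvd_mul.mp h1 with hqn | hqnm
  · -- q ∣ n, q ∣ b = m² + 2mn → q ∣ m² → q ∣ m, contradiction
    have : (q : ℤ) ∣ m ^ 2 := by
      have : m ^ 2 = b - 2 * m * n := by ring
      rw [this]
      exact dvd_sub hpb (hqn.mul_left (2 * m))
    exact hnotmn ⟨hp.dvd_of_dvd_pow this, hqn⟩
  · -- q ∣ n - m, q ∣ a = (n-m)² + 3mn → q ∣ 3mn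
    have h2 : (q : ℤ) ∣ 3 * (m * n) := by
      have : 3 * (m * n) = a - (n - m) ^ 2 := by ring
      rw [this]
      exact dvd_sub hpa (dvd_pow hqnm (by norm_num))
    rcases hp.dvd_mul.mp h2 with hq3 | hqmn
    · -- q ∣ 3 → q = 3 → 3 ∣ n - m, contradiction
      have hq3n : q ∣ 3 := by exact_mod_cast hq3
      have hq3' : q = 3 := (Nat.prime_dvd_prime_iff_eq hq (by norm_num)).mp hq3n
      exact h3' (by rw [show ((3:ℤ)) = ((3:ℕ):ℤ) by norm_num, ← hq3']; exact hqnm)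
    · rcases hp.dvd_mul.mp hqmn with hqm | hqn
      · exact hnotmn ⟨hqm, by have := dvd_sub hqnm (dvd_neg.mpr hqm); simpa using this⟩
      · exact hnotmn ⟨by have := dvd_sub hqn hqnm; simpa using this, hqn⟩

/-- For positive coprime integers `m > n` with `m ≢ n (mod 3)`, both
triples of Gilder's parametrization are primitive Eisensteinian triplets. -/
theorem gilder_param_isPrimitiveEisenstein (m n : ℤ) (hn : 0 < n) (hnm : n < m)
    (hg : Int.gcd m n = 1) (h3 : ¬ m ≡ n [ZMOD 3]) :
    IsPrimitiveEisenstein (m ^ 2 + m * n + n ^ 2) (m ^ 2 + 2 * m * n) (n ^ 2 + 2 * m * n) ∧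
    IsPrimitiveEisenstein (m ^ 2 + m * n + n ^ 2) (m ^ 2 + 2 * m * n) (m ^ 2 - n ^ 2) := by
  have hm : 0 < m := hn.trans hnm
  have hkey := gilder_key m n hg h3
  have hgcd : ∀ c : ℤ, Int.gcd (m ^ 2 + m * n + n ^ 2) (Int.gcd (m ^ 2 + 2 * m * n) c) = 1 := by
    intro c
    have hd : Int.gcd (m ^ 2 + m * n + n ^ 2) (Int.gcd (m ^ 2 + 2 * m * n) c) ∣
        Int.gcd (m ^ 2 + m * n + n ^ 2) (m ^ 2 + 2 * m * n) := by
      refine Nat.dvd_gcd (Nat.gcd_dvd_left _ _) ?_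
      refine (Nat.gcd_dvd_right _ _).trans ?_
      exact Nat.gcd_dvd_left (m ^ 2 + 2 * m * n).natAbs c.natAbs
    exact Nat.eq_one_of_dvd_one (hkey ▸ hd)
  refine ⟨⟨by nlinarith, by nlinarith, by nlinarith, by ring, hgcd _⟩,
    ⟨by nlinarith, by nlinarith, by nlinarith, by ring, hgcd _⟩⟩
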